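/- arXiv:1103.4296 — 3 statements merged into one kernel-verified Lean document; each statement's English description precedes it below -/
import Mathlib

section
/- For any x, y ∈ ℝ^d and u > 0, the Lebesgue measure of the symmetric difference B_∞(x,u) △ B_∞(y,u) is at most 2 · ‖x − y‖₁ · (2u)^{d−1}. -/
open MeasureTheory in
lemma aux_1d (a b u : ℝ) :
    volume {t : ℝ | |t - a| ≤ u ∧ u < |t - b|} ≤ ENNReal.ofReal |a - b| := by
  have hsub : {t : ℝ | |t - a| ≤ u ∧ u < |t - b|} ⊆
      Set.Ico (a - u) (b - u) ∪ Set.Ioc (b + u) (a + u) := by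
    intro t ⟨h1, h2⟩
    rw [abs_le] at h1
    rcases lt_abs.mp h2 with h | h
    · exact Or.inr ⟨by linarith, by linarith⟩
    · exact Or.inl ⟨by linarith, by linarith⟩
  calc volume {t : ℝ | |t - a| ≤ u ∧ u < |t - b|}
      ≤ volume (Set.Ico (a - u) (b - u) ∪ Set.Ioc (b + u) (a + u)) := measure_mono hsub
    _ ≤ volume (Set.Ico (a - u) (b - u)) + volume (Set.Ioc (b + u) (a + u)) :=
        measure_union_le _ _
    _ = ENNReal.ofReal (b - a) + ENNReal.ofReal (a - b) := by
        rw [Real.volume_Ico, Real.volume_Ioc]; ring_nf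
    _ ≤ ENNReal.ofReal |a - b| := by
        rcases le_total a b with h | h
        · rw [abs_of_nonpos (by linarith), ENNReal.ofReal_of_nonpos (by linarith : a - b ≤ 0)]
          simp
        · rw [abs_of_nonneg (by linarith), ENNReal.ofReal_of_nonpos (by linarith : b - a ≤ 0)]
          simp

open MeasureTheory in
lemma aux_diff (d : ℕ) (x y : Fin d → ℝ) (u : ℝ) (hu : 0 < u) :
    volume ({w : Fin d → ℝ | ∀ i, |w i - x i| ≤ u} \ {w | ∀ i, |w i - y i| ≤ u})
      ≤ ENNReal.ofReal ((∑ i, |x i - y i|) * (2 * u) ^ (d - 1)) := by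
  set S : Fin d → Set (Fin d → ℝ) := fun i =>
    Set.univ.pi (fun j => if j = i then {t : ℝ | |t - x j| ≤ u ∧ u < |t - y j|}
      else Set.Icc (x j - u) (x j + u))
  have hsub : {w : Fin d → ℝ | ∀ i, |w i - x i| ≤ u} \ {w | ∀ i, |w i - y i| ≤ u}
      ⊆ ⋃ i, S i := by
    intro w ⟨h1, h2⟩
    simp only [Set.mem_setOf_eq, not_forall, not_le] at h2
    obtain ⟨i, hi⟩ := h2
    refine Set.mem_iUnion.mpr ⟨i, fun j _ => ?_⟩
    by_cases hj : j = i
    · subst hj; simp only [if_pos rfl]; exact ⟨h1 j, hi⟩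
    · simp only [if_neg hj]; exact Set.mem_Icc.mpr (abs_le.mp (h1 j) |>.imp (by intro; linarith) (by intro; linarith))
  have hSi : ∀ i, volume (S i) ≤ ENNReal.ofReal (|x i - y i| * (2 * u) ^ (d - 1)) := by
    intro i
    have := MeasureTheory.volume_pi_pi (fun j => if j = i then {t : ℝ | |t - x j| ≤ u ∧ u < |t - y j|}
      else Set.Icc (x j - u) (x j + u))
    rw [show S i = _ from rfl, this]
    rw [← Finset.mul_prod_erase Finset.univ _ (Finset.mem_univ i)]
    have h1 : ∏ j ∈ Finset.univ.erase i,
        volume (if j = i then {t : ℝ | |t - x j| ≤ u ∧ u < |t - y j|}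
          else Set.Icc (x j - u) (x j + u)) = ENNReal.ofReal ((2 * u) ^ (d - 1)) := by
      have hfac : ∀ j ∈ Finset.univ.erase i,
          volume (if j = i then {t : ℝ | |t - x j| ≤ u ∧ u < |t - y j|}
            else Set.Icc (x j - u) (x j + u)) = ENNReal.ofReal (2 * u) := by
        intro j hj
        rw [if_neg (Finset.ne_of_mem_erase hj), Real.volume_Icc]
        congr 1; ring
      rw [Finset.prod_congr rfl hfac, Finset.prod_const,
        Finset.card_erase_of_mem (Finset.mem_univ i), Finset.card_univ, Fintype.card_fin,
        ← ENNReal.ofReal_pow (by linarith)]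
    rw [h1, if_pos rfl, ENNReal.ofReal_mul (abs_nonneg _)]
    exact mul_le_mul_left (aux_1d (x i) (y i) u) _
  calc volume ({w : Fin d → ℝ | ∀ i, |w i - x i| ≤ u} \ {w | ∀ i, |w i - y i| ≤ u})
      ≤ volume (⋃ i, S i) := measure_mono hsub
    _ ≤ ∑ i, volume (S i) := measure_iUnion_fintype_le _ _
    _ ≤ ∑ i, ENNReal.ofReal (|x i - y i| * (2 * u) ^ (d - 1)) := Finset.sum_le_sum fun i _ => hSi i
    _ = ENNReal.ofReal ((∑ i, |x i - y i|) * (2 * u) ^ (d - 1)) := by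
        rw [← ENNReal.ofReal_sum_of_nonneg (fun i _ => by positivity), Finset.sum_mul]

open MeasureTheory in
theorem stmt5 (d : ℕ) (x y : Fin d → ℝ) (u : ℝ) (hu : 0 < u) :
    volume (symmDiff {w : Fin d → ℝ | ∀ i, |w i - x i| ≤ u} {w | ∀ i, |w i - y i| ≤ u})
      ≤ ENNReal.ofReal (2 * (∑ i, |x i - y i|) * (2 * u) ^ (d - 1)) := by
  rw [Set.symmDiff_def]
  have h1 := aux_diff d x y u hu
  have h2 := aux_diff d y x u hu
  have hxy : (∑ i, |y i - x i|) = ∑ i, |x i - y i| := by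
    exact Finset.sum_congr rfl fun i _ => abs_sub_comm _ _
  rw [hxy] at h2
  calc volume (({w : Fin d → ℝ | ∀ i, |w i - x i| ≤ u} \ {w | ∀ i, |w i - y i| ≤ u}) ∪
        ({w | ∀ i, |w i - y i| ≤ u} \ {w | ∀ i, |w i - x i| ≤ u}))
      ≤ _ + _ := measure_union_le _ _
    _ ≤ ENNReal.ofReal ((∑ i, |x i - y i|) * (2 * u) ^ (d - 1)) +
        ENNReal.ofReal ((∑ i, |x i - y i|) * (2 * u) ^ (d - 1)) := add_le_add h1 h2
    _ = ENNReal.ofReal (2 * (∑ i, |x i - y i|) * (2 * u) ^ (d - 1)) := by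
        rw [← ENNReal.ofReal_add (by positivity) (by positivity)]
        ring_nf
end

section
/- Let f : ℝ^d → ℝ be convex and L-Lipschitz with respect to a norm ‖·‖, let μ be a probability density on ℝ^d, and define f_μ(x) = ∫ f(x + z) μ(z) dz. Then for all x, y, the dual norm of ∇f_μ(x) − ∇f_μ(y) is at most L · ∫ |μ(z − x) − μ(z − y)| dz. -/
open MeasureTheory in
theorem stmt9 {E : Type*} [NormedAddCommGroup E] [NormedSpace ℝ E]
    [FiniteDimensional ℝ E] [MeasurableSpace E] [BorelSpace E]
    (ν : Measure E) [ν.IsAddHaarMeasure]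
    (f : E → ℝ) (L : ℝ) (hconv : ConvexOn ℝ Set.univ f)
    (hlip : ∀ x y, |f x - f y| ≤ L * ‖x - y‖)
    (μ : E → ℝ) (hμpos : ∀ z, 0 ≤ μ z) (hμ1 : ∫ z, μ z ∂ν = 1)
    (fμ : E → ℝ) (hfμ : ∀ x, fμ x = ∫ z, f (x + z) * μ z ∂ν)
    (hdiff : Differentiable ℝ fμ) (x y : E) :
    ‖fderiv ℝ fμ x - fderiv ℝ fμ y‖ ≤ L * ∫ z, |μ (z - x) - μ (z - y)| ∂ν := by
  -- trivial case x = y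
  rcases eq_or_ne x y with rfl | hxy
  · simp
  -- L is nonnegative
  have hL : 0 ≤ L := by
    have h1 := (abs_nonneg (f x - f y)).trans (hlip x y)
    have h2 : 0 < ‖x - y‖ := by
      simpa [sub_eq_zero] using hxy
    nlinarith
  -- μ is integrable
  have hμint : Integrable μ ν := by
    by_contra h
    rw [integral_undef h] at hμ1
    norm_num at hμ1
  -- f is continuous
  have hK : LipschitzWith L.toNNReal f := by
    apply LipschitzWith.of_dist_le_mul
    intro a b
    rw [Real.dist_eq, dist_eq_norm]
    calc |f a - f b| ≤ L * ‖a - b‖ := hlip a b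
      _ ≤ (L.toNNReal : ℝ) * ‖a - b‖ :=
        mul_le_mul_of_nonneg_right (Real.le_coe_toNNReal L) (norm_nonneg _)
  have hfc : Continuous f := hK.continuous
  -- transfer of integrability between translates
  have htrans : ∀ a b : E, Integrable (fun z => f (a + z) * μ z) ν →
      Integrable (fun z => f (b + z) * μ z) ν := by
    intro a b hI
    have h2 : Integrable (fun z => (f (b + z) - f (a + z)) * μ z) ν := by
      apply Integrable.mono' (hμint.const_mul (L * ‖b - a‖))
      · exact (((hfc.comp (continuous_const.add continuous_id)).sub
          (hfc.comp (continuous_const.add continuous_id))).aestronglyMeasurable).mul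
          hμint.aestronglyMeasurable
      · filter_upwards with z
        rw [Real.norm_eq_abs, abs_mul, abs_of_nonneg (hμpos z)]
        have := hlip (b + z) (a + z)
        rw [add_sub_add_right_eq_sub] at this
        exact mul_le_mul_of_nonneg_right this (hμpos z)
    exact (hI.add h2).congr (Filter.Eventually.of_forall fun z => by simp only [Pi.add_apply]; ring)
  by_cases hint : Integrable (fun z => f (x + z) * μ z) ν
  · -- main case: everything is integrable
    have hIg : ∀ c : E, Integrable (fun z => f (c + z) * μ z) ν :=
      fun c => htrans x c hint
    -- integrability in the w-form
    have hInt : ∀ (a u : E), Integrable (fun w => f (w + u) * μ (w - a)) ν := by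
      intro a u
      have := (hIg (a + u)).comp_sub_right a
      refine this.congr (Filter.Eventually.of_forall fun w => ?_)
      congr 1
      abel_nf
    -- the translated representation of fμ
    have hfμ' : ∀ (a u : E), fμ (a + u) = ∫ w, f (w + u) * μ (w - a) ∂ν := by
      intro a u
      have h := integral_add_left_eq_self (μ := ν) (fun w => f (w + u) * μ (w - a)) a
      simp only [add_sub_cancel_left] at h
      rw [hfμ, ← h]
      congr 1
      funext z
      rw [add_right_comm]
    have hIntD : ∀ u : E,
        Integrable (fun w => f (w + u) * (μ (w - x) - μ (w - y))) ν := by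
      intro u
      exact ((hInt x u).sub (hInt y u)).congr
        (Filter.Eventually.of_forall fun w => by simp only [Pi.sub_apply]; ring)
    have hID0 : Integrable (fun w => f w * (μ (w - x) - μ (w - y))) ν := by
      simpa using hIntD 0
    have hdiff2 : ∀ u : E, fμ (x + u) - fμ (y + u)
        = ∫ w, f (w + u) * (μ (w - x) - μ (w - y)) ∂ν := by
      intro u
      rw [hfμ' x u, hfμ' y u, ← integral_sub (hInt x u) (hInt y u)]
      congr 1
      funext w
      ring
    have hD : Integrable (fun w => μ (w - x) - μ (w - y)) ν :=
      (hμint.comp_sub_right x).sub (hμint.comp_sub_right y)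
    set T : ℝ := ∫ z, |μ (z - x) - μ (z - y)| ∂ν with hT
    have hT0 : 0 ≤ T := integral_nonneg fun z => abs_nonneg _
    -- key estimate
    have hkey : ∀ u : E,
        |(fμ (x + u) - fμ (y + u)) - (fμ x - fμ y)| ≤ L * ‖u‖ * T := by
      intro u
      have e0 : fμ x - fμ y = ∫ w, f w * (μ (w - x) - μ (w - y)) ∂ν := by
        simpa using hdiff2 0
      rw [hdiff2 u, e0, ← integral_sub (hIntD u) hID0]
      calc |∫ w, (f (w + u) * (μ (w - x) - μ (w - y))
              - f w * (μ (w - x) - μ (w - y))) ∂ν|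
          ≤ ∫ w, |f (w + u) * (μ (w - x) - μ (w - y))
              - f w * (μ (w - x) - μ (w - y))| ∂ν := by
            simpa [Real.norm_eq_abs] using
              norm_integral_le_integral_norm (μ := ν)
                (fun w => f (w + u) * (μ (w - x) - μ (w - y))
                  - f w * (μ (w - x) - μ (w - y)))
        _ ≤ ∫ w, (L * ‖u‖) * |μ (w - x) - μ (w - y)| ∂ν := by
            apply integral_mono ((hIntD u).sub hID0).abs (hD.abs.const_mul _)
            intro w
            simp only [Pi.sub_apply]
            have h1 : f (w + u) * (μ (w - x) - μ (w - y))
                - f w * (μ (w - x) - μ (w - y))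
                = (f (w + u) - f w) * (μ (w - x) - μ (w - y)) := by ring
            rw [h1, abs_mul]
            have h2 := hlip (w + u) w
            rw [add_sub_cancel_left] at h2
            exact mul_le_mul_of_nonneg_right h2 (abs_nonneg _)
        _ = L * ‖u‖ * T := by rw [integral_const_mul]
    -- conclude via the operator norm
    apply ContinuousLinearMap.opNorm_le_bound _ (mul_nonneg hL hT0)
    intro v
    have hx0 : x + (0 : ℝ) • v = x := by simp
    have hy0 : y + (0 : ℝ) • v = y := by simp
    have hline : ∀ c : E, HasDerivAt (fun t : ℝ => c + t • v) v 0 := by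
      intro c
      simpa using ((hasDerivAt_id (0 : ℝ)).smul_const v).const_add c
    have hq1 : HasDerivAt (fun t : ℝ => fμ (x + t • v)) (fderiv ℝ fμ x v) 0 := by
      have hfd : HasFDerivAt fμ (fderiv ℝ fμ x) (x + (0 : ℝ) • v) := by
        rw [hx0]; exact (hdiff x).hasFDerivAt
      exact hfd.comp_hasDerivAt 0 (hline x)
    have hq2 : HasDerivAt (fun t : ℝ => fμ (y + t • v)) (fderiv ℝ fμ y v) 0 := by
      have hfd : HasFDerivAt fμ (fderiv ℝ fμ y) (y + (0 : ℝ) • v) := by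
        rw [hy0]; exact (hdiff y).hasFDerivAt
      exact hfd.comp_hasDerivAt 0 (hline y)
    have hq : HasDerivAt (fun t : ℝ => fμ (x + t • v) - fμ (y + t • v))
        (fderiv ℝ fμ x v - fderiv ℝ fμ y v) 0 := hq1.sub hq2
    rw [hasDerivAt_iff_tendsto_slope] at hq
    have habs := hq.abs
    have hle : |fderiv ℝ fμ x v - fderiv ℝ fμ y v| ≤ L * ‖v‖ * T := by
      refine le_of_tendsto habs ?_
      filter_upwards [self_mem_nhdsWithin] with t ht
      have ht' : t ≠ 0 := ht
      have ht0 : 0 < |t| := abs_pos.mpr ht'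
      rw [slope_def_field]
      have h0 : fμ (x + (0 : ℝ) • v) - fμ (y + (0 : ℝ) • v) = fμ x - fμ y := by
        rw [hx0, hy0]
      rw [h0, sub_zero, abs_div]
      rw [div_le_iff₀ ht0]
      have := hkey (t • v)
      rw [norm_smul, Real.norm_eq_abs] at this
      calc |fμ (x + t • v) - fμ (y + t • v) - (fμ x - fμ y)|
          ≤ L * (|t| * ‖v‖) * T := this
        _ = L * ‖v‖ * T * |t| := by ring
    calc ‖(fderiv ℝ fμ x - fderiv ℝ fμ y) v‖
        = |fderiv ℝ fμ x v - fderiv ℝ fμ y v| := by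
          rw [ContinuousLinearMap.sub_apply, Real.norm_eq_abs]
      _ ≤ L * ‖v‖ * T := hle
      _ = L * T * ‖v‖ := by ring
  · -- degenerate case: nothing is integrable and fμ ≡ 0
    have hall : ∀ a : E, ¬ Integrable (fun z => f (a + z) * μ z) ν := by
      intro a ha
      exact hint (htrans a x ha)
    have hzero : fμ = fun _ => 0 := by
      funext a
      rw [hfμ a, integral_undef (hall a)]
    rw [hzero]
    simp only [fderiv_fun_const, Pi.zero_apply, sub_self, norm_zero]
    exact mul_nonneg hL (integral_nonneg fun z => abs_nonneg _)
end

section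
/- Let h_u be the shifted Huber function on ℝ: h_u(x) = x²/(2u) + u/2 for |x| ≤ u and h_u(x) = |x| for |x| > u. If Z is uniformly distributed on [−u, u], then E[|x + Z|] = h_u(x) for every x ∈ ℝ. -/
open MeasureTheory

lemma aux_deriv (s : ℝ) : HasDerivAt (fun t : ℝ => t * |t| / 2) |s| s := by
  rcases lt_trichotomy s 0 with hs | hs | hs
  · have h : HasDerivAt (fun t : ℝ => -(t ^ 2) / 2) (-s) s := by
      have := ((hasDerivAt_pow 2 s).neg.div_const 2)
      exact this.congr_deriv (by norm_num; ring)
    have heq : (fun t : ℝ => t * |t| / 2) =ᶠ[nhds s] (fun t : ℝ => -(t ^ 2) / 2) := by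
      filter_upwards [eventually_lt_nhds hs] with t ht
      rw [abs_of_neg ht]; ring
    rw [abs_of_neg hs]
    exact h.congr_of_eventuallyEq heq
  · subst hs
    rw [hasDerivAt_iff_tendsto_slope]
    have : ∀ t : ℝ, t ≠ 0 → slope (fun t : ℝ => t * |t| / 2) 0 t = |t| / 2 := by
      intro t ht
      simp only [slope_def_field]
      field_simp
      ring
    rw [show |(0:ℝ)| = 0 by simp]
    have h2 : Filter.Tendsto (fun t : ℝ => |t| / 2) (nhdsWithin (0:ℝ) {(0:ℝ)}ᶜ) (nhds (0:ℝ)) := by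
      have : Filter.Tendsto (fun t : ℝ => |t| / 2) (nhds (0:ℝ)) (nhds (0:ℝ)) := by
        simpa using (continuous_abs.div_const 2).tendsto (0:ℝ)
      exact this.mono_left nhdsWithin_le_nhds
    refine h2.congr' ?_
    filter_upwards [self_mem_nhdsWithin] with t ht
    exact (this t ht).symm
  · have h : HasDerivAt (fun t : ℝ => t ^ 2 / 2) s s := by
      have := ((hasDerivAt_pow 2 s).div_const 2)
      exact this.congr_deriv (by norm_num)
    have heq : (fun t : ℝ => t * |t| / 2) =ᶠ[nhds s] (fun t : ℝ => t ^ 2 / 2) := by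
      filter_upwards [eventually_gt_nhds hs] with t ht
      rw [abs_of_pos ht]; ring
    rw [abs_of_pos hs]
    exact h.congr_of_eventuallyEq heq

open MeasureTheory in
theorem stmt19 (u : ℝ) (hu : 0 < u) (x : ℝ) :
    (2 * u)⁻¹ * ∫ z in (-u)..u, |x + z|
      = if |x| ≤ u then x ^ 2 / (2 * u) + u / 2 else |x| := by
  have hint : ∫ z in (-u)..u, |x + z|
      = (x + u) * |x + u| / 2 - (x + -u) * |x + -u| / 2 := by
    apply intervalIntegral.integral_eq_sub_of_hasDerivAt
      (f := fun t => (x + t) * |x + t| / 2)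
    · intro t _
      exact ((aux_deriv (x + t)).comp t ((hasDerivAt_id t).const_add x)).congr_deriv (mul_one _)
    · exact ((continuous_abs.comp (continuous_const.add continuous_id)).intervalIntegrable _ _)
  rw [hint]
  rcases le_or_gt |x| u with h | h
  · rw [if_pos h]
    rw [abs_le] at h
    rw [abs_of_nonneg (by linarith), abs_of_nonpos (by linarith)]
    field_simp
    ring
  · rw [if_neg (not_le.mpr h)]
    rcases le_or_gt x 0 with hx | hx
    · have hx' : x < -u := by rw [abs_of_nonpos hx] at h; linarith
      rw [abs_of_nonpos hx, abs_of_neg (by linarith : x + u < 0),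
        abs_of_neg (by linarith : x + -u < 0)]
      field_simp; ring
    · have hx' : u < x := by rw [abs_of_pos hx] at h; linarith
      rw [abs_of_pos hx, abs_of_pos (by linarith : 0 < x + u),
        abs_of_pos (by linarith : 0 < x + -u)]
      field_simp; ring
end
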